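/- In ℂ[T][[z]], the identity (∑_{n≥1} A_n(T) · z^n/n!) · (1 - T·e^{z(1-T)}) = e^{z(1-T)} - 1 holds. -/

import Mathlib

open PowerSeries

private lemma coe_sum_aux (s : Finset ℕ) (f : ℕ → Polynomial ℂ) :
    ((∑ i ∈ s, f i : Polynomial ℂ) : PowerSeries ℂ)
      = ∑ i ∈ s, ((f i : Polynomial ℂ) : PowerSeries ℂ) := by
  simp only [← Polynomial.coeToPowerSeries.ringHom_apply, map_sum]

private lemma binom_sum_aux (n : ℕ) :
    (PowerSeries.mk (fun k => ((k : ℂ) + 1) ^ n)) =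
      1 + PowerSeries.X * ∑ i ∈ Finset.range (n + 1),
        (PowerSeries.C (n.choose i : ℂ)) * PowerSeries.mk (fun k => ((k : ℂ) + 1) ^ i) := by
  ext k
  cases k with
  | zero => simp
  | succ k =>
    rw [map_add, PowerSeries.coeff_one, PowerSeries.coeff_succ_X_mul, PowerSeries.coeff_mk,
      map_sum]
    simp only [PowerSeries.coeff_C_mul, PowerSeries.coeff_mk, if_neg (Nat.succ_ne_zero k),
      zero_add]
    push_cast
    have := add_pow ((k : ℂ) + 1) 1 n
    simp only [one_pow, mul_one] at this
    rw [this]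
    exact Finset.sum_congr rfl fun i _ => by ring

private lemma key_aux (A : ℕ → Polynomial ℂ)
    (hA : ∀ n, ((A n : PowerSeries ℂ)) =
      (1 - X) ^ (n + 1) * PowerSeries.mk (fun k => ((k : ℂ) + 1) ^ n)) (n : ℕ) :
    A n = (1 - Polynomial.X) ^ (n + 1) + Polynomial.X *
      ∑ i ∈ Finset.range (n + 1), Polynomial.C (n.choose i : ℂ) *
        ((1 - Polynomial.X) ^ (n - i) * A i) := by
  rw [← Polynomial.coe_inj]
  rw [Polynomial.coe_add, Polynomial.coe_mul, Polynomial.coe_pow, Polynomial.coe_sub,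
    Polynomial.coe_one, Polynomial.coe_X, coe_sum_aux]
  simp only [Polynomial.coe_mul, Polynomial.coe_pow, Polynomial.coe_sub, Polynomial.coe_one,
    Polynomial.coe_X, Polynomial.coe_C]
  rw [hA n, binom_sum_aux n]
  have h : ∀ i ∈ Finset.range (n + 1),
      PowerSeries.C (n.choose i : ℂ)
          * ((1 - X) ^ (n - i) * ((A i : Polynomial ℂ) : PowerSeries ℂ))
      = (1 - X) ^ (n + 1) *
        (PowerSeries.C (n.choose i : ℂ) * PowerSeries.mk (fun k => ((k : ℂ) + 1) ^ i)) := by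
    intro i hi
    rw [hA i]
    have hp : ((1 : PowerSeries ℂ) - X) ^ (n - i) * (1 - X) ^ (i + 1) = (1 - X) ^ (n + 1) := by
      rw [← pow_add]
      congr 1
      have := Finset.mem_range.mp hi
      omega
    calc PowerSeries.C (n.choose i : ℂ) *
          ((1 - X) ^ (n - i) * ((1 - X) ^ (i + 1) * PowerSeries.mk fun k => ((k : ℂ) + 1) ^ i))
        = ((1 - X) ^ (n - i) * (1 - X) ^ (i + 1)) *
          (PowerSeries.C (n.choose i : ℂ) * PowerSeries.mk fun k => ((k : ℂ) + 1) ^ i) := by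
          ring
      _ = _ := by rw [hp]
  rw [Finset.sum_congr rfl h, ← Finset.mul_sum]
  ring

/-- In `ℂ[T][[z]]`: `(∑_{n≥1} A_n(T) z^n/n!) · (1 - T·e^{z(1-T)}) = e^{z(1-T)} - 1`,
where `A_n` is the Eulerian polynomial and `e^{z(1-T)}` is the formal series
whose `z^n`-coefficient is `(1-T)^n/n!`. -/
theorem eulerian_genfun_substituted (A : ℕ → Polynomial ℂ)
    (hA : ∀ n, ((A n : PowerSeries ℂ)) =
      (1 - X) ^ (n + 1) * PowerSeries.mk (fun k => ((k : ℂ) + 1) ^ n)) :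
    (PowerSeries.mk (fun n => if n = 0 then 0 else ((n.factorial : ℂ)⁻¹) • A n)
        : PowerSeries (Polynomial ℂ))
      * (1 - PowerSeries.C (Polynomial.X : Polynomial ℂ)
          * PowerSeries.mk (fun n => ((n.factorial : ℂ)⁻¹) • (1 - Polynomial.X) ^ n))
    = PowerSeries.mk (fun n => ((n.factorial : ℂ)⁻¹) • (1 - Polynomial.X) ^ n) - 1 := by
  -- A 0 = 1
  have hA0 : A 0 = 1 := by
    rw [← Polynomial.coe_inj, hA 0, Polynomial.coe_one, pow_one]
    ext k
    cases k with
    | zero => simp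
    | succ k =>
      rw [sub_mul, one_mul, map_sub, PowerSeries.coeff_succ_X_mul, PowerSeries.coeff_mk,
        PowerSeries.coeff_mk, PowerSeries.coeff_one]
      simp
  set E : PowerSeries (Polynomial ℂ) :=
    PowerSeries.mk (fun n => ((n.factorial : ℂ)⁻¹) • (1 - Polynomial.X) ^ n) with hE
  set F' : PowerSeries (Polynomial ℂ) :=
    PowerSeries.mk (fun n => ((n.factorial : ℂ)⁻¹) • A n) with hF'
  have hF : (PowerSeries.mk (fun n => if n = 0 then 0 else ((n.factorial : ℂ)⁻¹) • A n)
      : PowerSeries (Polynomial ℂ)) = F' - 1 := by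
    ext k : 1
    rw [map_sub, PowerSeries.coeff_mk, hF', PowerSeries.coeff_mk, PowerSeries.coeff_one]
    cases k with
    | zero => simp [hA0]
    | succ k => simp
  rw [hF]
  have main : F' * (1 - PowerSeries.C (Polynomial.X : Polynomial ℂ) * E)
      = (1 - PowerSeries.C (Polynomial.X : Polynomial ℂ)) * E := by
    ext n : 1
    rw [mul_sub, mul_one, map_sub, sub_mul, one_mul, map_sub]
    rw [mul_left_comm, PowerSeries.coeff_C_mul, PowerSeries.coeff_C_mul]
    rw [hF', hE, PowerSeries.coeff_mk, PowerSeries.coeff_mk, PowerSeries.coeff_mul]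
    rw [Finset.Nat.sum_antidiagonal_eq_sum_range_succ_mk]
    simp only [PowerSeries.coeff_mk]
    -- now a polynomial identity
    rw [key_aux A hA n]
    have hterm : ∀ i ∈ Finset.range (n + 1),
        ((i.factorial : ℂ)⁻¹ • A i) * (((n - i).factorial : ℂ)⁻¹ • (1 - Polynomial.X) ^ (n - i))
        = ((n.factorial : ℂ)⁻¹) •
          (Polynomial.C (n.choose i : ℂ) * ((1 - Polynomial.X) ^ (n - i) * A i)) := by
      intro i hi
      have hle : i ≤ n := Nat.lt_succ_iff.mp (Finset.mem_range.mp hi)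
      have hsc : (i.factorial : ℂ)⁻¹ * ((n - i).factorial : ℂ)⁻¹
          = (n.factorial : ℂ)⁻¹ * (n.choose i : ℂ) := by
        have hfac : ((n.choose i : ℂ)) * (i.factorial : ℂ) * ((n - i).factorial : ℂ)
            = (n.factorial : ℂ) := by
          exact_mod_cast congrArg (Nat.cast : ℕ → ℂ)
            (Nat.choose_mul_factorial_mul_factorial hle)
        have h1 : (i.factorial : ℂ) ≠ 0 := Nat.cast_ne_zero.mpr i.factorial_ne_zero
        have h2 : ((n - i).factorial : ℂ) ≠ 0 := Nat.cast_ne_zero.mpr (n - i).factorial_ne_zero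
        have h3 : (n.factorial : ℂ) ≠ 0 := Nat.cast_ne_zero.mpr n.factorial_ne_zero
        field_simp
        linear_combination -hfac
      rw [smul_mul_smul_comm, Polynomial.smul_eq_C_mul, Polynomial.smul_eq_C_mul, hsc, map_mul]
      ring
    rw [Finset.sum_congr rfl hterm, ← Finset.smul_sum, mul_smul_comm, ← smul_sub,
      add_sub_cancel_right, mul_smul_comm, ← smul_sub]
    congr 1
    rw [pow_succ]
    ring
  rw [sub_mul, one_mul, main]
  ring
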